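/- Lemma 3: Let H_A, H_B be Hilbert spaces, |Ψ⟩ ∈ H_A ⊗ H_B a unit vector, and |φ^A⟩, |φ̄^A⟩ ∈ H_A, |φ^B⟩, |φ̄^B⟩ ∈ H_B unit vectors (not necessarily orthogonal within each party). Assume ⟨Ψ|(|φ^A⟩⊗|φ̄^B⟩) = 0 and ⟨Ψ|(|φ̄^A⟩⊗|φ^B⟩) = 0. Then |⟨Ψ|(|φ^A⟩⊗|φ^B⟩)|² + |⟨Ψ|(|φ̄^A⟩⊗|φ̄^B⟩)|² ≤ 1. -/

import Mathlib

open Matrix BigOperators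
open scoped Kronecker ComplexOrder

noncomputable section

/-- A positive operator on a bipartite space is separable if it is a finite sum of
tensor (Kronecker) products of positive semidefinite local operators. -/
def IsSepOp {m n : Type*} [Fintype m] [Fintype n]
    (σ : Matrix (m × n) (m × n) ℂ) : Prop :=
  ∃ (k : ℕ) (f : Fin k → Matrix m m ℂ) (g : Fin k → Matrix n n ℂ),
    (∀ i, (f i).PosSemidef) ∧ (∀ i, (g i).PosSemidef) ∧ σ = ∑ i, f i ⊗ₖ g i

variable {A0 A B B0 : Type*} [Fintype A0] [Fintype A] [Fintype B] [Fintype B0]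
  [DecidableEq A0] [DecidableEq A] [DecidableEq B] [DecidableEq B0]

/-- `I^{A0} ⊗ ρ^{AB} ⊗ I^{B0}` as an operator on `H_{A0} ⊗ H_A ⊗ H_B ⊗ H_{B0}`. -/
def midEmbed (ρ : Matrix (A × B) (A × B) ℂ) :
    Matrix ((A0 × A) × (B × B0)) ((A0 × A) × (B × B0)) ℂ :=
  Matrix.of fun p q =>
    (if p.1.1 = q.1.1 then 1 else 0) * ρ (p.1.2, p.2.1) (q.1.2, q.2.1) *
      (if p.2.2 = q.2.2 then 1 else 0)

/-- Partial trace over the middle factors `H_A ⊗ H_B`. -/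
def ptraceMid (M : Matrix ((A0 × A) × (B × B0)) ((A0 × A) × (B × B0)) ℂ) :
    Matrix (A0 × B0) (A0 × B0) ℂ :=
  Matrix.of fun p q => ∑ a : A, ∑ b : B, M ((p.1, a), (b, p.2)) ((q.1, a), (b, q.2))

/-- Effective operator `Tr_{AB}[(I ⊗ ρ^{AB} ⊗ I)(M^{A0A} ⊗ M^{BB0})]`. -/
def effOp (ρ : Matrix (A × B) (A × B) ℂ)
    (M1 : Matrix (A0 × A) (A0 × A) ℂ) (M2 : Matrix (B × B0) (B × B0) ℂ) :
    Matrix (A0 × B0) (A0 × B0) ℂ :=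
  ptraceMid (midEmbed ρ * (M1 ⊗ₖ M2))

/-- Tensor product of vectors. -/
def tens {m n : Type*} (u : m → ℂ) (v : n → ℂ) : m × n → ℂ := fun p => u p.1 * v p.2

/-- Rank-one projector `|v⟩⟨v|` associated to a vector. -/
def vecProj {m : Type*} (v : m → ℂ) : Matrix m m ℂ := Matrix.of fun p q => v p * star (v q)

open scoped InnerProductSpace

lemma key_bessel {E : Type*} [NormedAddCommGroup E] [InnerProductSpace ℂ E]
    (Ψ u w : E) (hΨ : ‖Ψ‖ = 1) (hu : ‖u‖ = 1) (hw : ‖w‖ ≤ 1)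
    (huw : ⟪u, w⟫_ℂ = 0) :
    ‖⟪Ψ, u⟫_ℂ‖ ^ 2 + ‖⟪Ψ, w⟫_ℂ‖ ^ 2 ≤ 1 := by
  set a : ℂ := ⟪u, Ψ⟫_ℂ with ha
  set Ψ' : E := Ψ - a • u with hΨ'
  have h1 : ⟪Ψ', w⟫_ℂ = ⟪Ψ, w⟫_ℂ := by
    simp [hΨ', inner_sub_left, inner_smul_left, huw]
  have hre : RCLike.re ⟪Ψ, a • u⟫_ℂ = ‖a‖ ^ 2 := by
    rw [inner_smul_right]
    have : ⟪Ψ, u⟫_ℂ = starRingEnd ℂ a := by rw [ha, inner_conj_symm]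
    rw [this, Complex.mul_conj']
    simp [sq]
  have hn : ‖Ψ'‖ ^ 2 = 1 - ‖a‖ ^ 2 := by
    rw [hΨ', @norm_sub_sq ℂ, hre, hΨ, norm_smul, hu]
    simp [mul_pow]
    ring
  have h2 : ‖⟪Ψ, w⟫_ℂ‖ ≤ ‖Ψ'‖ := by
    calc ‖⟪Ψ, w⟫_ℂ‖ = ‖⟪Ψ', w⟫_ℂ‖ := by rw [h1]
    _ ≤ ‖Ψ'‖ * ‖w‖ := norm_inner_le_norm _ _
    _ ≤ ‖Ψ'‖ * 1 := by gcongr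
    _ = ‖Ψ'‖ := mul_one _
  have h3 : ‖⟪Ψ, w⟫_ℂ‖ ^ 2 ≤ 1 - ‖a‖ ^ 2 := by
    rw [← hn]; gcongr
  have h4 : ‖⟪Ψ, u⟫_ℂ‖ = ‖a‖ := by rw [ha]; exact norm_inner_symm _ _
  rw [h4]; linarith

def toE {ι : Type*} (x : ι → ℂ) : EuclideanSpace ℂ ι := WithLp.toLp 2 x

lemma dot_eq_inner {ι : Type*} [Fintype ι] (x y : ι → ℂ) :
    star x ⬝ᵥ y = ⟪toE x, toE y⟫_ℂ := by
  simp [toE, dotProduct, PiLp.inner_apply, RCLike.inner_apply, mul_comm]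

lemma tens_dot {ιA ιB : Type*} [Fintype ιA] [Fintype ιB]
    (u u' : ιA → ℂ) (v v' : ιB → ℂ) :
    star (tens u v) ⬝ᵥ tens u' v' = (star u ⬝ᵥ u') * (star v ⬝ᵥ v') := by
  have h : ∀ p : ιA × ιB, star (tens u v) p * tens u' v' p
      = (star (u p.1) * u' p.1) * (star (v p.2) * v' p.2) := by
    intro p; simp [tens]; ring
  simp only [dotProduct, h, Finset.sum_mul_sum]
  exact Fintype.sum_prod_type _

lemma norm_of_dot_one {ι : Type*} [Fintype ι] (x : ι → ℂ) (h : star x ⬝ᵥ x = 1) :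
    ‖(toE x)‖ = 1 := by
  have hin : ⟪toE x, toE x⟫_ℂ = 1 := by rw [← dot_eq_inner]; exact h
  have h3 : ‖(toE x)‖ ^ 2 = 1 := by
    have h5 := inner_self_eq_norm_sq (𝕜 := ℂ) (toE x)
    rw [hin] at h5
    simpa using h5.symm
  nlinarith [norm_nonneg (toE x)]

/-- Lemma 3, inequality: under the two cross orthogonality conditions,
`|⟨Ψ|φ^A φ^B⟩|² + |⟨Ψ|φ̄^A φ̄^B⟩|² ≤ 1`. -/
theorem stmt7 {ιA ιB : Type*} [Fintype ιA] [Fintype ιB]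
    (Ψ : ιA × ιB → ℂ) (hΨ : star Ψ ⬝ᵥ Ψ = 1)
    (φA φA' : ιA → ℂ) (φB φB' : ιB → ℂ)
    (hφA : star φA ⬝ᵥ φA = 1) (hφA' : star φA' ⬝ᵥ φA' = 1)
    (hφB : star φB ⬝ᵥ φB = 1) (hφB' : star φB' ⬝ᵥ φB' = 1)
    (h1 : star Ψ ⬝ᵥ tens φA φB' = 0) (h2 : star Ψ ⬝ᵥ tens φA' φB = 0) :
    ‖star Ψ ⬝ᵥ tens φA φB‖ ^ 2 + ‖star Ψ ⬝ᵥ tens φA' φB'‖ ^ 2 ≤ 1 := by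
  classical
  set s : ℂ := star φA ⬝ᵥ φA' with hs
  set r : ιA → ℂ := φA' - s • φA with hr
  have hconj : star φA' ⬝ᵥ φA = starRingEnd ℂ s := by
    rw [hs]
    simp [dotProduct, map_sum, mul_comm]
  have hr0 : star φA ⬝ᵥ r = 0 := by
    simp [hr, dotProduct_sub, dotProduct_smul, hφA, ← hs]
  have hrr : star r ⬝ᵥ r = 1 - s * starRingEnd ℂ s := by
    simp only [hr, star_sub, star_smul, sub_dotProduct, dotProduct_sub, smul_dotProduct,
      dotProduct_smul, hφA, hφA', hconj, ← hs, smul_eq_mul]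
    ring
  have hsplit : tens φA' φB' = s • tens φA φB' + tens r φB' := by
    funext p; simp [tens, hr]; ring
  have hb : star Ψ ⬝ᵥ tens φA' φB' = star Ψ ⬝ᵥ tens r φB' := by
    rw [hsplit]
    simp [dotProduct_add, dotProduct_smul, h1]
  have huw : star (tens φA φB) ⬝ᵥ tens r φB' = 0 := by
    rw [tens_dot, hr0, zero_mul]
  -- norms
  have hΨn := norm_of_dot_one Ψ hΨ
  have hun := norm_of_dot_one (tens φA φB) (by rw [tens_dot, hφA, hφB, one_mul])
  have hwn : ‖(toE (tens r φB'))‖ ≤ 1 := by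
    have hww : star (tens r φB') ⬝ᵥ tens r φB' = 1 - s * starRingEnd ℂ s := by
      rw [tens_dot, hrr, hφB', mul_one]
    have hin : ⟪toE (tens r φB'), toE (tens r φB')⟫_ℂ = 1 - s * starRingEnd ℂ s := by
      rw [← dot_eq_inner]; exact hww
    have h3 : ‖(toE (tens r φB'))‖ ^ 2
        = 1 - Complex.normSq s := by
      have h5 := inner_self_eq_norm_sq (𝕜 := ℂ) (toE (tens r φB'))
      rw [hin] at h5
      simpa [Complex.mul_conj] using h5.symm
    nlinarith [norm_nonneg (toE (tens r φB')),
      Complex.normSq_nonneg s]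
  have key := key_bessel (E := EuclideanSpace ℂ (ιA × ιB))
    (toE Ψ)
    (toE (tens φA φB))
    (toE (tens r φB'))
    hΨn hun hwn (by rw [← dot_eq_inner]; exact huw)
  rw [← dot_eq_inner, ← dot_eq_inner] at key
  rw [hb]
  exact key
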